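/- Let U be the Lucas sequence with parameters (P,Q), D = P² - 4Q, and ε(m) the Jacobi symbol (D | m). If n = k·p² is a (P,Q)-Lucas pseudoprime with ε(n) = -1, where p is prime and k ≥ 1, then U_{p-ε(p)} ≡ 0 (mod p²). -/

import Mathlib

/-- The Lucas sequence `U` with parameters `(P, Q)`. -/
def lucasU (P Q : ℤ) : ℕ → ℤ
  | 0 => 0
  | 1 => 1
  | (n + 2) => P * lucasU P Q (n + 1) - Q * lucasU P Q n

namespace LucasAux
variable (P Q : ℤ)

theorem lucasU_add (b : ℕ) : ∀ a, lucasU P Q (a+b+1) =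
    lucasU P Q (a+1) * lucasU P Q (b+1) - Q * lucasU P Q a * lucasU P Q b := by
  intro a
  induction a using Nat.twoStepInduction with
  | zero => simp [lucasU]
  | one =>
    have e : 1 + b + 1 = b + 2 := by omega
    rw [e, show lucasU P Q (b+2) = P * lucasU P Q (b+1) - Q * lucasU P Q b from rfl]
    simp [lucasU]
  | more a ih1 ih2 =>
    have e1 : a + 2 + b + 1 = (a + b + 1) + 2 := by ring
    have e2 : a + 1 + b + 1 = (a + b + 1) + 1 := by ring
    rw [e1, show lucasU P Q ((a+b+1)+2) = P * lucasU P Q ((a+b+1)+1) - Q * lucasU P Q (a+b+1) from rfl,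
      ← e2, ih2, ih1,
      show lucasU P Q (a+2+1) = P * lucasU P Q (a+2) - Q * lucasU P Q (a+1) from rfl,
      show lucasU P Q (a+1+1) = P * lucasU P Q (a+1) - Q * lucasU P Q a from rfl]
    ring

theorem lucasU_sq (m : ℕ) : lucasU P Q (m+1)^2 - P * lucasU P Q (m+1) * lucasU P Q m
    + Q * lucasU P Q m ^ 2 = Q ^ m := by
  induction m with
  | zero => simp [lucasU]
  | succ m ih =>
    rw [show lucasU P Q (m+1+1) = P * lucasU P Q (m+1) - Q * lucasU P Q m from rfl]
    linear_combination Q * ih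

theorem dvd_lucasU_mul (N : ℤ) (m : ℕ) (h : N ∣ lucasU P Q m) :
    ∀ t, N ∣ lucasU P Q (m * t) := by
  intro t
  induction t with
  | zero => simp [lucasU]
  | succ t ih =>
    rcases Nat.eq_zero_or_pos m with hm | hm
    · simp [hm, lucasU]
    · have e : m * (t+1) = m * t + (m - 1) + 1 := by rw [Nat.mul_succ]; omega
      rw [e, lucasU_add]
      have e2 : m - 1 + 1 = m := by omega
      rw [e2]
      exact dvd_sub (Dvd.dvd.mul_left h _) (((ih.mul_left _).mul_right _))

theorem isCoprime_lucasU_succ (N : ℤ) (hQ : IsCoprime N Q) (m : ℕ)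
    (h : N ∣ lucasU P Q m) : IsCoprime N (lucasU P Q (m+1)) := by
  have key := lucasU_sq P Q m
  obtain ⟨c, hc⟩ := h
  have hQm : IsCoprime N (Q ^ m) := hQ.pow_right
  rw [hc] at key
  have hthis : Q ^ m = lucasU P Q (m+1) * (lucasU P Q (m+1) - P * (N * c))
      + N * (Q * c * (N * c)) := by linear_combination -key
  rw [hthis] at hQm
  exact hQm.of_add_mul_left_right.of_mul_right_left

theorem rank_dvd (N : ℤ) (hQ : IsCoprime N Q) (w : ℕ) (hw : 0 < w)
    (hU : N ∣ lucasU P Q w) (hmin : ∀ j, 0 < j → N ∣ lucasU P Q j → w ≤ j) :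
    ∀ m, N ∣ lucasU P Q m → w ∣ m := by
  intro m
  induction m using Nat.strong_induction_on with
  | _ m ih =>
    intro hm
    rcases Nat.eq_zero_or_pos m with h0 | h0
    · simp [h0]
    have hwm : w ≤ m := hmin m h0 hm
    rcases eq_or_lt_of_le hwm with he | hlt
    · exact he ▸ dvd_refl w
    have e : m = (m - w - 1) + w + 1 := by omega
    have hadd := lucasU_add P Q w (m - w - 1)
    rw [← e] at hadd
    have e2 : m - w - 1 + 1 = m - w := by omega
    rw [e2] at hadd
    have hdvd : N ∣ lucasU P Q (m - w) * lucasU P Q (w+1) := by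
      have : lucasU P Q (m - w) * lucasU P Q (w+1) =
          lucasU P Q m + Q * lucasU P Q (m - w - 1) * lucasU P Q w := by
        rw [hadd]; ring
      rw [this]
      exact dvd_add hm (hU.mul_left _)
    have hcop := isCoprime_lucasU_succ P Q N hQ w hU
    have hNd : N ∣ lucasU P Q (m - w) := hcop.dvd_of_dvd_mul_right hdvd
    obtain ⟨t, ht⟩ := ih (m - w) (by omega) hNd
    exact ⟨t + 1, by rw [Nat.mul_succ]; omega⟩


theorem lucasU_rep_B (c : ℤ) (m : ℕ) (h : c ∣ lucasU P Q m) :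
    ∀ t, c^2 ∣ lucasU P Q (m*t+1) - lucasU P Q (m+1)^t := by
  intro t
  induction t with
  | zero => simp [lucasU]
  | succ t ih =>
    have hadd := lucasU_add P Q m (m*t)
    rw [show m*t+m+1 = m*(t+1)+1 by ring] at hadd
    rw [hadd]
    have h1 : c^2 ∣ Q * lucasU P Q (m*t) * lucasU P Q m := by
      rw [sq, mul_assoc]
      exact (mul_dvd_mul (dvd_lucasU_mul P Q c m h t) h).mul_left Q
    have h2 : c^2 ∣ (lucasU P Q (m*t+1) - lucasU P Q (m+1)^t) * lucasU P Q (m+1) :=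
      ih.mul_right _
    have e : lucasU P Q (m*t+1) * lucasU P Q (m+1) - Q * lucasU P Q (m*t) * lucasU P Q m
        - lucasU P Q (m+1)^(t+1)
        = (lucasU P Q (m*t+1) - lucasU P Q (m+1)^t) * lucasU P Q (m+1)
          - Q * lucasU P Q (m*t) * lucasU P Q m := by ring
    rw [e]
    exact dvd_sub h2 h1

theorem lucasU_rep_A (c : ℤ) (m : ℕ) (hm : 0 < m) (h : c ∣ lucasU P Q m) :
    ∀ t, c^2 ∣ lucasU P Q (m*(t+1)) - ((t:ℤ)+1) * lucasU P Q m * lucasU P Q (m+1)^t := by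
  intro t
  induction t with
  | zero => simp
  | succ t ih =>
    have hB := lucasU_rep_B P Q c m h (t+1)
    have hadd := lucasU_add P Q (m-1) (m*(t+1))
    rw [show m*(t+1)+(m-1)+1 = m*(t+2) by rw [Nat.mul_succ m (t+1)]; omega,
        show m-1+1 = m by omega] at hadd
    have hy : lucasU P Q (m+1) = P * lucasU P Q m - Q * lucasU P Q (m-1) := by
      rw [show m+1 = (m-1)+2 by omega, show m = (m-1)+1 by omega]
      rfl
    have hx2 : c^2 ∣ lucasU P Q m * lucasU P Q m := by rw [sq]; exact mul_dvd_mul h h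
    have key : lucasU P Q (m*(t+2)) - ((t:ℤ)+1+1) * lucasU P Q m * lucasU P Q (m+1)^(t+1)
        = lucasU P Q m * (lucasU P Q (m*(t+1)+1) - lucasU P Q (m+1)^(t+1))
          + (-Q * lucasU P Q (m-1)) *
            (lucasU P Q (m*(t+1)) - ((t:ℤ)+1) * lucasU P Q m * lucasU P Q (m+1)^t)
          + (-(P * ((t:ℤ)+1) * lucasU P Q (m+1)^t)) * (lucasU P Q m * lucasU P Q m) := by
      rw [hadd]
      linear_combination (-((t:ℤ)+1) * lucasU P Q m * lucasU P Q (m+1)^t) * hy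
    rw [show ((t:ℕ)+1+1 : ℕ) = t+2 by ring, show (((t:ℕ)+1 : ℕ):ℤ)+1 = (t:ℤ)+1+1 by push_cast; ring, key]
    exact dvd_add (dvd_add (hB.mul_left _) (ih.mul_left _)) (hx2.mul_left _)

theorem lucasU_repetition (p : ℕ) (m : ℕ) (hm : 0 < m) (h : (p:ℤ) ∣ lucasU P Q m) :
    ((p:ℤ))^2 ∣ lucasU P Q (m * p) := by
  rcases Nat.eq_zero_or_pos p with h0 | h0
  · simp [h0, lucasU]
  have hA := lucasU_rep_A P Q (p:ℤ) m hm h (p-1)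
  rw [show p-1+1 = p by omega] at hA
  have e : (((p-1 : ℕ)):ℤ)+1 = (p:ℤ) := by omega
  rw [e] at hA
  have h2 : ((p:ℤ))^2 ∣ (p:ℤ) * lucasU P Q m * lucasU P Q (m+1)^(p-1) := by
    rw [sq]
    exact (mul_dvd_mul_left (p:ℤ) h).mul_right _
  have h3 := dvd_add hA h2
  simpa using h3

theorem lucasU_map {F : Type*} [CommRing F] (φ : ℤ →+* F) (α β : F)
    (hs : α + β = φ P) (hpr : α * β = φ Q) :
    ∀ n, (α - β) * φ (lucasU P Q n) = α^n - β^n := by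
  intro n
  induction n using Nat.twoStepInduction with
  | zero => simp [lucasU]
  | one => simp [lucasU]
  | more n ih1 ih2 =>
    show (α - β) * φ (P * lucasU P Q (n+1) - Q * lucasU P Q n) = _
    rw [map_sub, map_mul, map_mul, ← hs, ← hpr]
    linear_combination (α + β) * ih2 - (α * β) * ih1

theorem law_of_apparition (D : ℤ) (hDdef : D = P^2 - 4*Q) (p : ℕ) (hp : p.Prime)
    (hodd : p ≠ 2) (hDp : ¬ (p:ℤ) ∣ D) (hQp : ¬ (p:ℤ) ∣ Q) :
    (p:ℤ) ∣ lucasU P Q (((p:ℤ) - jacobiSym D p).toNat) := by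
  haveI : Fact p.Prime := ⟨hp⟩
  set F := GaloisField p 2 with hF
  haveI : Fintype F := Fintype.ofFinite F
  let ψ : ZMod p →+* F := algebraMap (ZMod p) F
  have hψinj : Function.Injective ψ := ψ.injective
  let φ : ℤ →+* F := Int.castRingHom F
  have hφψ : ∀ x : ℤ, φ x = ψ ((x : ZMod p)) := by
    intro x
    simp [φ, ψ, map_intCast]
  -- dvd conclusion helper
  have hconc : ∀ x : ℤ, φ x = 0 → (p:ℤ) ∣ x := by
    intro x hx
    rw [hφψ, ← map_zero ψ] at hx
    have := hψinj hx
    rwa [ZMod.intCast_zmod_eq_zero_iff_dvd] at this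
  have hDz : ((D : ZMod p)) ≠ 0 := by
    rw [Ne, ZMod.intCast_zmod_eq_zero_iff_dvd]; exact hDp
  have hQz : ((Q : ZMod p)) ≠ 0 := by
    rw [Ne, ZMod.intCast_zmod_eq_zero_iff_dvd]; exact hQp
  have hφD : φ D ≠ 0 := by
    rw [hφψ]
    exact fun h => hDz (hψinj (h.trans (map_zero ψ).symm))
  have hφQ : φ Q ≠ 0 := by
    rw [hφψ]
    exact fun h => hQz (hψinj (h.trans (map_zero ψ).symm))
  have hpodd : p % 2 = 1 := Nat.odd_iff.mp (hp.odd_of_ne_two hodd)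
  have hp2 : 2 ≤ p := hp.two_le
  -- 2 is invertible
  have h2F : (2 : F) ≠ 0 := by
    have h2z : ((2:ℤ) : ZMod p) ≠ 0 := by
      rw [Ne, ZMod.intCast_zmod_eq_zero_iff_dvd]
      intro h
      have h2 : p ∣ 2 := by exact_mod_cast h
      exact hodd ((Nat.prime_dvd_prime_iff_eq hp Nat.prime_two).mp h2)
    have : φ 2 ≠ 0 := by
      rw [hφψ]
      exact fun h => h2z (hψinj (h.trans (map_zero ψ).symm))
    simpa using this
  -- square root of D in F
  have hcard : Fintype.card F = p ^ 2 := by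
    rw [← Nat.card_eq_fintype_card]
    exact GaloisField.card p 2 (by norm_num)
  have hringChar : ringChar F ≠ 2 := by
    rw [ringChar.eq F p]
    exact hodd
  have hsq : IsSquare (φ D) := by
    rw [FiniteField.isSquare_iff hringChar hφD]
    have e1 : Fintype.card F / 2 = (p - 1) * ((p + 1) / 2) := by
      rw [hcard]
      obtain ⟨j, hj⟩ := Nat.odd_iff.mpr hpodd
      subst hj
      rw [show (2*j+1)^2 = 2*(2*j*(j+1))+1 from by ring,
        show 2*j+1-1 = 2*j from by omega,
        show (2*j+1+1)/2 = j+1 from by omega]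
      omega
    rw [e1, pow_mul, hφψ]
    rw [← map_pow, ZMod.pow_card_sub_one_eq_one hDz, map_one, one_pow]
  obtain ⟨δ, hδ⟩ := hsq
  have hδ0 : δ ≠ 0 := by
    intro h
    rw [h, mul_zero] at hδ
    exact hφD hδ
  -- Euler's criterion
  set ε : ℤ := legendreSym p D with hε
  have hjac : jacobiSym D p = ε := (jacobiSym.legendreSym.to_jacobiSym p D).symm
  have heps : ε = 1 ∨ ε = -1 := legendreSym.eq_one_or_neg_one p hDz
  have heuler : δ ^ (p - 1) = φ ε := by
    have e2 : p - 1 = 2 * (p / 2) := by omega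
    rw [e2, pow_mul, sq, ← hδ, hφψ, hφψ, ← map_pow]
    congr 1
    exact (legendreSym.eq_pow p D).symm
  -- the roots
  set c : F := (2 : F)⁻¹ with hc
  have hc2 : (2 : F) * c = 1 := mul_inv_cancel₀ h2F
  set α : F := (φ P + δ) * c with hα
  set β : F := (φ P - δ) * c with hβ
  have hDm : φ D = φ P * φ P - 4 * φ Q := by
    rw [hDdef]
    simp only [φ, Int.coe_castRingHom]
    push_cast
    ring
  have hs : α + β = φ P := by
    rw [hα, hβ]; linear_combination φ P * hc2
  have hpr : α * β = φ Q := by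
    rw [hα, hβ]
    linear_combination (c^2) * hδ + (-c^2) * hDm + (φ Q * (2*c + 1)) * hc2
  have hαβ : α - β = δ := by
    rw [hα, hβ]; linear_combination δ * hc2
  have hα0 : α ≠ 0 := fun h => hφQ (by rw [← hpr, h, zero_mul])
  have hβ0 : β ≠ 0 := fun h => hφQ (by rw [← hpr, h, mul_zero])
  -- Frobenius
  have hfixψ : ∀ z : ZMod p, (ψ z) ^ p = ψ z := by
    intro z
    rw [← map_pow, ZMod.pow_card]
  have hcp : c ^ p = c := by
    rw [hc, inv_pow]
    congr 1
    have : (2:F) = ψ 2 := by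
      have := hφψ 2; simpa using this
    rw [this, hfixψ]
  have hPp : (φ P) ^ p = φ P := by rw [hφψ, hfixψ]
  have hδp : δ ^ p = φ ε * δ := by
    have : δ ^ p = δ ^ (p - 1) * δ := by
      rw [← pow_succ]
      congr 1
      omega
    rw [this, heuler]
  have hαp : α ^ p = (φ P + φ ε * δ) * c := by
    rw [hα, mul_pow, add_pow_char, hPp, hδp, hcp]
  have hβp : β ^ p = (φ P - φ ε * δ) * c := by
    rw [hβ, mul_pow, sub_pow_char, hPp, hδp, hcp]
  rcases heps with h1 | h1
  · -- ε = 1 : p ∣ U (p-1)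
    have hφε : φ ε = 1 := by rw [h1]; simp
    rw [hφε, one_mul] at hαp hβp
    rw [← hα] at hαp
    rw [← hβ] at hβp
    have hα1 : α ^ (p - 1) = 1 := by
      have : α ^ (p-1) * α = 1 * α := by
        rw [← pow_succ, one_mul, show p - 1 + 1 = p by omega, hαp]
      exact mul_right_cancel₀ hα0 this
    have hβ1 : β ^ (p - 1) = 1 := by
      have : β ^ (p-1) * β = 1 * β := by
        rw [← pow_succ, one_mul, show p - 1 + 1 = p by omega, hβp]
      exact mul_right_cancel₀ hβ0 this
    have hkey := lucasU_map P Q φ α β hs hpr (p - 1)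
    rw [hα1, hβ1, sub_self, hαβ] at hkey
    have hU0 : φ (lucasU P Q (p-1)) = 0 := by
      rcases mul_eq_zero.mp hkey with h | h
      · exact absurd h hδ0
      · exact h
    have he : ((p:ℤ) - jacobiSym D p).toNat = p - 1 := by
      rw [hjac, h1]
      omega
    rw [he]
    exact hconc _ hU0
  · -- ε = -1 : p ∣ U (p+1)
    have hφε : φ ε = -1 := by rw [h1]; simp
    rw [hφε] at hαp hβp
    have hαp' : α ^ p = β := by rw [hαp, hβ, neg_one_mul, ← sub_eq_add_neg]
    have hβp' : β ^ p = α := by rw [hβp, hα, neg_one_mul, sub_neg_eq_add]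
    have hkey := lucasU_map P Q φ α β hs hpr (p + 1)
    rw [pow_succ, pow_succ, hαp', hβp', hαβ] at hkey
    have hU0 : φ (lucasU P Q (p+1)) = 0 := by
      have : δ * φ (lucasU P Q (p+1)) = 0 := by rw [hkey, mul_comm, sub_self]
      rcases mul_eq_zero.mp this with h | h
      · exact absurd h hδ0
      · exact h
    have he : ((p:ℤ) - jacobiSym D p).toNat = p + 1 := by
      rw [hjac, h1]
      omega
    rw [he]
    exact hconc _ hU0

end LucasAux

open LucasAux in
theorem lucas_psp_square_factor_wallsunsun
    (P Q : ℤ) (k p n : ℕ) (hp : p.Prime) (hk : 1 ≤ k)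
    (D : ℤ) (hD : D = P ^ 2 - 4 * Q)
    (hn : n = k * p ^ 2)
    (hcomp : ¬ n.Prime) (hn1 : 1 < n)
    (hgcd : Int.gcd (n : ℤ) (2 * Q * D) = 1)
    (heps : jacobiSym D n = -1)
    (hlucas : (n : ℤ) ∣ lucasU P Q (n + 1)) :
    ((p : ℤ) ^ 2) ∣ lucasU P Q (((p : ℤ) - jacobiSym D p).toNat) := by
  classical
  have hpn : (p:ℤ) ∣ (n:ℤ) := by
    rw [hn]; push_cast; exact ⟨(k:ℤ)*p, by ring⟩
  have hp2n : ((p:ℤ))^2 ∣ (n:ℤ) := by rw [hn]; push_cast; exact ⟨(k:ℤ), by ring⟩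
  have hcopn : IsCoprime (n:ℤ) (2*Q*D) := Int.isCoprime_iff_gcd_eq_one.mpr hgcd
  have hcopp : IsCoprime ((p:ℤ)) (2*Q*D) := IsCoprime.of_isCoprime_of_dvd_left hcopn hpn
  have hcopD : IsCoprime ((p:ℤ)) D := hcopp.of_mul_right_right
  have hcop2Q : IsCoprime ((p:ℤ)) (2*Q) := hcopp.of_mul_right_left
  have hcopQ : IsCoprime ((p:ℤ)) Q := hcop2Q.of_mul_right_right
  have hcop2 : IsCoprime ((p:ℤ)) 2 := hcop2Q.of_mul_right_left
  have hpnotunit : ¬ IsUnit ((p:ℤ)) := by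
    rw [Int.isUnit_iff]
    have := hp.two_le
    omega
  have hpQ : ¬ (p:ℤ) ∣ Q := fun h => hpnotunit (hcopQ.isUnit_of_dvd' dvd_rfl h)
  have hpD : ¬ (p:ℤ) ∣ D := fun h => hpnotunit (hcopD.isUnit_of_dvd' dvd_rfl h)
  have hodd : p ≠ 2 := by
    intro h
    exact hpnotunit (hcop2.isUnit_of_dvd' dvd_rfl (by rw [h]; norm_num))
  have hp3 : 3 ≤ p := by have := hp.two_le; omega
  -- jacobi symbol value
  have hjac : jacobiSym D p = 1 ∨ jacobiSym D p = -1 := by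
    apply jacobiSym.eq_one_or_neg_one
    exact Int.isCoprime_iff_gcd_eq_one.mp (hcopD.symm)
  set e : ℕ := ((p:ℤ) - jacobiSym D p).toNat with he
  have hepos : 0 < e := by rcases hjac with h | h <;> (rw [he, h]; omega)
  have hap : (p:ℤ) ∣ lucasU P Q e := law_of_apparition P Q D hD p hp hodd hpD hpQ
  -- the rank of apparition mod p
  have hex1 : ∃ j, 0 < j ∧ (p:ℤ) ∣ lucasU P Q j := ⟨e, hepos, hap⟩
  set r : ℕ := Nat.find hex1 with hr
  obtain ⟨hrpos, hrdvd⟩ := Nat.find_spec hex1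
  have hrmin : ∀ j, 0 < j → (p:ℤ) ∣ lucasU P Q j → r ≤ j := fun j h1 h2 =>
    Nat.find_min' hex1 ⟨h1, h2⟩
  have hre : r ∣ e := rank_dvd P Q (p:ℤ) hcopQ r hrpos hrdvd hrmin e hap
  -- p^2 divides U (r*p)
  have hrp : ((p:ℤ))^2 ∣ lucasU P Q (r * p) := lucasU_repetition P Q p r hrpos hrdvd
  -- the rank of apparition mod p^2
  have hex2 : ∃ j, 0 < j ∧ ((p:ℤ))^2 ∣ lucasU P Q j :=
    ⟨r * p, Nat.mul_pos hrpos hp.pos, hrp⟩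
  set w : ℕ := Nat.find hex2 with hw
  obtain ⟨hwpos, hwdvd⟩ := Nat.find_spec hex2
  have hwmin : ∀ j, 0 < j → ((p:ℤ))^2 ∣ lucasU P Q j → w ≤ j := fun j h1 h2 =>
    Nat.find_min' hex2 ⟨h1, h2⟩
  have hcopQ2 : IsCoprime (((p:ℤ))^2) Q := hcopQ.pow_left
  have hwall : ∀ m, ((p:ℤ))^2 ∣ lucasU P Q m → w ∣ m :=
    rank_dvd P Q ((p:ℤ)^2) hcopQ2 w hwpos hwdvd hwmin
  -- w divides n+1
  have hwn1 : w ∣ n + 1 := by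
    apply hwall
    have : ((p:ℤ))^2 ∣ lucasU P Q (n+1) := dvd_trans hp2n hlucas
    exact_mod_cast this
  -- w divides r*p
  have hwrp : w ∣ r * p := hwall _ hrp
  -- p does not divide w
  have hpw : ¬ p ∣ w := by
    intro h
    have h1 : p ∣ n + 1 := dvd_trans h hwn1
    have h2 : p ∣ n := by
      rw [hn]; exact ⟨k * p, by ring⟩
    have h3 : p ∣ 1 := by simpa using Nat.dvd_sub h1 h2
    have := Nat.le_of_dvd one_pos h3
    have := hp.two_le
    omega
  have hcopwp : Nat.Coprime w p := (Nat.Prime.coprime_iff_not_dvd hp |>.mpr hpw).symm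
  have hwr : w ∣ r := hcopwp.dvd_of_dvd_mul_right hwrp
  have hwe : w ∣ e := dvd_trans hwr hre
  obtain ⟨t, ht⟩ := hwe
  rw [ht]
  exact dvd_lucasU_mul P Q _ w hwdvd t
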